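/- For every integer n ≥ 0 and every subset B ⊆ X, the probability that ε contains two disjoint level-n chunks each contained in B is at most the square of the probability that ε contains a level-n chunk contained in B. -/

import Mathlib

open scoped ENNReal

/-- A level-`n` chunk of the error configuration `ε`. -/
def IsChunk {X : Type*} [MetricSpace X] (Q : ℝ) (ε : Set X) : ℕ → Set X → Prop
  | 0, C => ∃ x ∈ ε, C = {x}
  | n + 1, C => ∃ A B : Set X, IsChunk Q ε n A ∧ IsChunk Q ε n B ∧ Disjoint A B ∧
      C = A ∪ B ∧ Metric.diam C ≤ Q ^ (n + 1) / 2

/-- The Bernoulli(`p`) product measure: each point of `X` is included in the random subset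
independently with probability `p` (for `p ∈ [0,1]`); a random subset is encoded as its
indicator function `f : X → Bool`, the subset being `{x | f x = true}`. -/
noncomputable def bernoulliProduct (X : Type*) [Fintype X] (p : ℝ) :
    MeasureTheory.Measure (X → Bool) :=
  MeasureTheory.Measure.pi fun _ =>
    (PMF.bernoulli (min (Real.toNNReal p) 1) (min_le_right _ _)).toMeasure

/-! ### Auxiliary facts about chunks -/

theorem BK.isChunk_mono {X : Type*} [MetricSpace X] {Q : ℝ} {ε ε' : Set X} (h : ε ⊆ ε') :
    ∀ n C, IsChunk Q ε n C → IsChunk Q ε' n C := by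
  intro n
  induction n with
  | zero => rintro C ⟨x, hx, rfl⟩; exact ⟨x, h hx, rfl⟩
  | succ n ih =>
    rintro C ⟨A, B, hA, hB, hd, rfl, hdiam⟩
    exact ⟨A, B, ih A hA, ih B hB, hd, rfl, hdiam⟩

theorem BK.isChunk_subset {X : Type*} [MetricSpace X] {Q : ℝ} {ε : Set X} :
    ∀ n C, IsChunk Q ε n C → C ⊆ ε := by
  intro n
  induction n with
  | zero => rintro C ⟨x, hx, rfl⟩; simpa using hx
  | succ n ih =>
    rintro C ⟨A, B, hA, hB, hd, rfl, hdiam⟩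
    exact Set.union_subset (ih A hA) (ih B hB)

theorem BK.isChunk_self {X : Type*} [MetricSpace X] {Q : ℝ} {ε : Set X} :
    ∀ n C, IsChunk Q ε n C → IsChunk Q C n C := by
  intro n
  induction n with
  | zero => rintro C ⟨x, hx, rfl⟩; exact ⟨x, rfl, rfl⟩
  | succ n ih =>
    rintro C ⟨A, B, hA, hB, hd, rfl, hdiam⟩
    exact ⟨A, B, BK.isChunk_mono Set.subset_union_left n A (ih A hA),
      BK.isChunk_mono Set.subset_union_right n B (ih B hB), hd, rfl, hdiam⟩

theorem BK.isChunk_iff {X : Type*} [MetricSpace X] {Q : ℝ} {ε : Set X} {n : ℕ} {C : Set X} :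
    IsChunk Q ε n C ↔ IsChunk Q C n C ∧ C ⊆ ε :=
  ⟨fun h => ⟨BK.isChunk_self n C h, BK.isChunk_subset n C h⟩,
   fun ⟨h, hsub⟩ => BK.isChunk_mono hsub n C h⟩

/-! ### The van den Berg–Kesten argument for witness families -/

namespace BK

open scoped Classical

/-- classical indicator of a proposition -/
noncomputable def indic (P : Prop) : ℝ≥0∞ := if P then 1 else 0

theorem indic_le_one (P : Prop) : indic P ≤ 1 := by
  unfold indic; split <;> norm_num

variable {X : Type*} [Fintype X] [DecidableEq X] (b : Bool → ℝ≥0∞) (𝒮 : Set (Set X))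

/-- product weight of a configuration -/
noncomputable def wt (f : X → Bool) : ℝ≥0∞ := ∏ x, b (f x)

/-- read coordinates in `K` from `g`, others from `f`. -/
def merge (K : Finset X) (f g : X → Bool) : X → Bool := fun x => if x ∈ K then g x else f x

/-- configuration `f` contains the witness `S` -/
def Hits (f : X → Bool) (S : Set X) : Prop := ∀ x ∈ S, f x = true

/-- interpolating events: disjoint witnesses, the second reading coordinates in `K`
from the second copy -/
def AK (K : Finset X) (f g : X → Bool) : Prop :=
  ∃ S₁ ∈ 𝒮, ∃ S₂ ∈ 𝒮, Disjoint S₁ S₂ ∧ Hits f S₁ ∧ Hits (merge K f g) S₂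

noncomputable def TT (K : Finset X) : ℝ≥0∞ :=
  ∑ q : (X → Bool) × (X → Bool), wt b q.1 * wt b q.2 * indic (AK 𝒮 K q.1 q.2)

theorem hits_mono {f f' : X → Bool} (h : ∀ x, f x = true → f' x = true) {S : Set X}
    (hf : Hits f S) : Hits f' S := fun x hx => h x (hf x hx)

theorem ak_mono {K : Finset X} {f f' g g' : X → Bool}
    (hf : ∀ x, f x = true → f' x = true) (hg : ∀ x, g x = true → g' x = true) :
    AK 𝒮 K f g → AK 𝒮 K f' g' := by
  rintro ⟨S₁, hS₁, S₂, hS₂, hd, h1, h2⟩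
  refine ⟨S₁, hS₁, S₂, hS₂, hd, hits_mono hf h1, hits_mono ?_ h2⟩
  intro x hx
  unfold merge at hx ⊢
  split at hx <;> split <;> first | exact hg _ hx | exact hf _ hx | exact absurd hx (by simp_all)

variable {b 𝒮}

theorem wt_swap (j : X) (f g : X → Bool) :
    wt b (Function.update f j (g j)) * wt b (Function.update g j (f j)) = wt b f * wt b g := by
  have key : ∀ h : X → Bool, ∀ c : Bool,
      wt b (Function.update h j c) = b c * ∏ x ∈ Finset.univ.erase j, b (h x) := by
    intro h c
    unfold wt
    rw [← Finset.mul_prod_erase Finset.univ _ (Finset.mem_univ j)]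
    rw [Function.update_self]
    congr 1
    exact Finset.prod_congr rfl fun x hx =>
      by rw [Function.update_of_ne (Finset.ne_of_mem_erase hx)]
  have keyf : wt b f = b (f j) * ∏ x ∈ Finset.univ.erase j, b (f x) := by
    have := key f (f j); rwa [Function.update_eq_self] at this
  have keyg : wt b g = b (g j) * ∏ x ∈ Finset.univ.erase j, b (g x) := by
    have := key g (g j); rwa [Function.update_eq_self] at this
  rw [key, key, keyf, keyg]
  ring

/-- the swap of the `j`-th coordinates between the two copies -/
def swapAt (j : X) (q : (X → Bool) × (X → Bool)) : (X → Bool) × (X → Bool) :=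
  (Function.update q.1 j (q.2 j), Function.update q.2 j (q.1 j))

theorem swapAt_involutive (j : X) : Function.Involutive (swapAt (X := X) j) := by
  rintro ⟨f, g⟩
  simp only [swapAt, Function.update_self, Function.update_idem, Prod.mk.injEq]
  constructor <;> simp [Function.update_eq_self]

/-- key combinatorial identities relating `AK K` and `AK (insert j K)` -/
theorem merge_insert (K : Finset X) (j : X) (hj : j ∉ K) (f g : X → Bool) :
    merge K f g = merge (insert j K) f (Function.update g j (f j)) := by
  funext x
  unfold merge
  by_cases hx : x = j
  · subst hx; simp [Function.update_self, hj]
  · by_cases hK : x ∈ K <;> simp [hx, hK, Function.update_of_ne hx]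

theorem ak_step (j : X) (K : Finset X) (hj : j ∉ K) (f g : X → Bool) :
    indic (AK 𝒮 K f g)
      + indic (AK 𝒮 K (Function.update f j (g j)) (Function.update g j (f j)))
    ≤ indic (AK 𝒮 (insert j K) f g)
      + indic (AK 𝒮 (insert j K) (Function.update f j (g j)) (Function.update g j (f j))) := by
  set K' := insert j K with hK'
  -- the event as a function of the two j-coordinate values
  set V : Bool → Bool → Prop :=
    fun α β => AK 𝒮 K' (Function.update f j α) (Function.update g j β) with hV
  have hmerge_upd : ∀ (f' g' : X → Bool), merge K f' g' =
      merge K' f' (Function.update g' j (f' j)) := fun f' g' => merge_insert K j hj f' g'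
  -- F1 : AK K f g ↔ V (f j) (f j)
  have F1 : AK 𝒮 K f g ↔ V (f j) (f j) := by
    simp only [hV, Function.update_eq_self]
    unfold AK
    rw [hmerge_upd f g]
  -- F2 : AK K (update f j (g j)) (update g j (f j)) ↔ V (g j) (g j)
  have F2 : AK 𝒮 K (Function.update f j (g j)) (Function.update g j (f j)) ↔ V (g j) (g j) := by
    simp only [hV]
    unfold AK
    rw [hmerge_upd (Function.update f j (g j)) (Function.update g j (f j))]
    rw [Function.update_self, Function.update_idem]
  -- F3 : AK K' f g ↔ V (f j) (g j)
  have F3 : AK 𝒮 K' f g ↔ V (f j) (g j) := by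
    simp [hV, Function.update_eq_self]
  -- F4 : AK K' (update f j (g j)) (update g j (f j)) ↔ V (g j) (f j)
  have F4 : AK 𝒮 K' (Function.update f j (g j)) (Function.update g j (f j))
      ↔ V (g j) (f j) := Iff.rfl
  -- monotonicity of V
  have upd_mono : ∀ (h : X → Bool) (β : Bool), ∀ x,
      Function.update h j false x = true → Function.update h j β x = true := by
    intro h β x hx
    by_cases hxj : x = j
    · subst hxj; rw [Function.update_self] at hx; exact absurd hx (by simp)
    · rwa [Function.update_of_ne hxj] at hx ⊢
  have VmonoL : ∀ β, V false β → V true β := by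
    intro β
    exact ak_mono _ (upd_mono f true) (fun x hx => hx)
  have VmonoR : ∀ α, V α false → V α true := by
    intro α
    exact ak_mono _ (fun x hx => hx) (upd_mono g true)
  -- the split property
  have Vsplit : V true true → V true false ∨ V false true := by
    rintro ⟨S₁, hS₁, S₂, hS₂, hd, h1, h2⟩
    by_cases hjS₂ : j ∈ S₂
    · -- j ∈ S₂, so j ∉ S₁; lower f's j-coordinate
      right
      have hjS₁ : j ∉ S₁ := fun h => (hd.ne_of_mem h hjS₂) rfl
      refine ⟨S₁, hS₁, S₂, hS₂, hd, ?_, ?_⟩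
      · intro x hx
        have hxj : x ≠ j := fun h => hjS₁ (h ▸ hx)
        rw [Function.update_of_ne hxj]
        have := h1 x hx
        rwa [Function.update_of_ne hxj] at this
      · intro x hx
        unfold merge at h2 ⊢
        by_cases hxj : x = j
        · subst hxj
          simp only [hK', Finset.mem_insert, true_or, if_true, Function.update_self]
        · have := h2 x hx
          by_cases hK : x ∈ K' <;>
            simp only [hK, if_true, if_false] at this ⊢ <;>
            rwa [Function.update_of_ne hxj] at this ⊢
    · -- j ∉ S₂: lower g's j-coordinate
      left
      refine ⟨S₁, hS₁, S₂, hS₂, hd, h1, ?_⟩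
      intro x hx
      have hxj : x ≠ j := fun h => hjS₂ (h ▸ hx)
      have := h2 x hx
      unfold merge at this ⊢
      by_cases hK : x ∈ K' <;>
        simp only [hK, if_true, if_false] at this ⊢ <;>
        first
          | rwa [Function.update_of_ne hxj] at this ⊢
          | exact this
  -- now the case bash
  unfold indic
  rw [F1, F2, F3, F4]
  rcases Bool.eq_false_or_eq_true (f j) with hf | hf <;>
    rcases Bool.eq_false_or_eq_true (g j) with hg | hg <;>
    rw [hf, hg] <;>
    try exact le_rfl
  all_goals (
    by_cases h11 : V true true
    · by_cases h10 : V true false <;> by_cases h01 : V false true <;>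
        by_cases h00 : V false false
      all_goals first
        | (exact absurd (Vsplit h11) (not_or.mpr ⟨h10, h01⟩))
        | (exact absurd (VmonoR false h00) h01)
        | (exact absurd (VmonoL false h00) h10)
        | (simp [h11, h10, h01, h00] <;> norm_num)
    · have h00 : ¬ V false false := fun h => h11 (VmonoL true (VmonoR false h))
      have h10 : ¬ V true false := fun h => h11 (VmonoR true h)
      have h01 : ¬ V false true := fun h => h11 (VmonoL true h)
      simp [h11, h00, h10, h01])

/-- reindexing the double sum by the swap -/
theorem TT_swap (K : Finset X) (j : X) :
    TT b 𝒮 K = ∑ q : (X → Bool) × (X → Bool),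
      wt b q.1 * wt b q.2 * indic (AK 𝒮 K (swapAt j q).1 (swapAt j q).2) := by
  unfold TT
  rw [← Equiv.sum_comp (Function.Involutive.toPerm _ (swapAt_involutive (X := X) j))]
  refine Finset.sum_congr rfl fun q _ => ?_
  have : wt b ((swapAt j q).1) * wt b ((swapAt j q).2) = wt b q.1 * wt b q.2 :=
    wt_swap j q.1 q.2
  simp only [Function.Involutive.coe_toPerm]
  rw [this]

theorem TT_step (j : X) (K : Finset X) (hj : j ∉ K) :
    TT b 𝒮 K ≤ TT b 𝒮 (insert j K) := by
  rw [← ENNReal.mul_le_mul_iff_right (a := 2) (by norm_num) (by norm_num)]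
  have expand : ∀ K' : Finset X, 2 * TT b 𝒮 K' = ∑ q : (X → Bool) × (X → Bool),
      (wt b q.1 * wt b q.2 * indic (AK 𝒮 K' q.1 q.2)
        + wt b q.1 * wt b q.2 * indic (AK 𝒮 K' (swapAt j q).1 (swapAt j q).2)) := by
    intro K'
    rw [Finset.sum_add_distrib, two_mul]
    congr 1
    exact TT_swap K' j
  rw [expand K, expand (insert j K)]
  refine Finset.sum_le_sum fun q _ => ?_
  rw [← mul_add, ← mul_add]
  exact mul_le_mul_right (ak_step j K hj q.1 q.2) _

theorem TT_le (K : Finset X) : TT b 𝒮 ∅ ≤ TT b 𝒮 K := by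
  refine Finset.induction_on K le_rfl fun j K hj ih => le_trans ih (TT_step j K hj)

/-- the main abstract BK-type inequality -/
theorem main :
    (∑ f : X → Bool, wt b f *
      indic (∃ S₁ ∈ 𝒮, ∃ S₂ ∈ 𝒮, Disjoint S₁ S₂ ∧ Hits f S₁ ∧ Hits f S₂))
    * (∑ g : X → Bool, wt b g)
    ≤ (∑ f : X → Bool, wt b f * indic (∃ S ∈ 𝒮, Hits f S))
      * (∑ g : X → Bool, wt b g * indic (∃ S ∈ 𝒮, Hits g S)) := by
  have h0 : TT b 𝒮 ∅ = (∑ f : X → Bool, wt b f *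
      indic (∃ S₁ ∈ 𝒮, ∃ S₂ ∈ 𝒮, Disjoint S₁ S₂ ∧ Hits f S₁ ∧ Hits f S₂))
      * (∑ g : X → Bool, wt b g) := by
    unfold TT
    rw [Fintype.sum_prod_type]
    rw [Finset.sum_mul]
    refine Finset.sum_congr rfl fun f _ => ?_
    rw [Finset.mul_sum]
    refine Finset.sum_congr rfl fun g _ => ?_
    have h : AK 𝒮 ∅ f g ↔ ∃ S₁ ∈ 𝒮, ∃ S₂ ∈ 𝒮, Disjoint S₁ S₂ ∧ Hits f S₁ ∧ Hits f S₂ := by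
      unfold AK merge
      simp
    unfold indic
    by_cases h2 : AK 𝒮 ∅ f g
    · rw [if_pos h2, if_pos (h.1 h2)]; ring
    · rw [if_neg h2, if_neg (fun hc => h2 (h.2 hc))]; ring
  have h1 : TT b 𝒮 Finset.univ ≤
      (∑ f : X → Bool, wt b f * indic (∃ S ∈ 𝒮, Hits f S))
      * (∑ g : X → Bool, wt b g * indic (∃ S ∈ 𝒮, Hits g S)) := by
    rw [Fintype.sum_mul_sum]
    unfold TT
    rw [Fintype.sum_prod_type]
    refine Finset.sum_le_sum fun f _ => Finset.sum_le_sum fun g _ => ?_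
    have : indic (AK 𝒮 Finset.univ f g) ≤
        indic (∃ S ∈ 𝒮, Hits f S) * indic (∃ S ∈ 𝒮, Hits g S) := by
      unfold indic
      split
      · rename_i h
        obtain ⟨S₁, hS₁, S₂, hS₂, hd, hh1, hh2⟩ := h
        have hg : Hits g S₂ := by
          intro x hx
          have := hh2 x hx
          unfold merge at this
          simpa using this
        rw [if_pos ⟨S₁, hS₁, hh1⟩, if_pos ⟨S₂, hS₂, hg⟩]; norm_num
      · exact zero_le
    calc wt b f * wt b g * indic (AK 𝒮 Finset.univ f g)
        ≤ wt b f * wt b g * (indic (∃ S ∈ 𝒮, Hits f S) * indic (∃ S ∈ 𝒮, Hits g S)) :=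
          mul_le_mul_right this _
      _ = wt b f * indic (∃ S ∈ 𝒮, Hits f S)
          * (wt b g * indic (∃ S ∈ 𝒮, Hits g S)) := by ring
  calc _ = TT b 𝒮 ∅ := h0.symm
    _ ≤ TT b 𝒮 Finset.univ := TT_le _
    _ ≤ _ := h1

/-- the main inequality, assuming the weights are normalized -/
theorem main' (htot : (∑ g : X → Bool, wt b g) = 1) :
    (∑ f : X → Bool, wt b f *
      indic (∃ S₁ ∈ 𝒮, ∃ S₂ ∈ 𝒮, Disjoint S₁ S₂ ∧ Hits f S₁ ∧ Hits f S₂))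
    ≤ (∑ f : X → Bool, wt b f * indic (∃ S ∈ 𝒮, Hits f S))
      * (∑ g : X → Bool, wt b g * indic (∃ S ∈ 𝒮, Hits g S)) := by
  have h := main (b := b) (𝒮 := 𝒮)
  rwa [htot, mul_one] at h

end BK

/-! ### Bridging the measure to finite sums -/

open scoped Classical in
theorem BK.measure_eq_sum {X : Type*} [Fintype X] [DecidableEq X] (p : ℝ)
    (P : (X → Bool) → Prop) :
    bernoulliProduct X p {f | P f} = ∑ f : X → Bool,
      BK.wt (fun c => cond c (((min (Real.toNNReal p) 1 : NNReal) : ℝ≥0∞))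
        (1 - ((min (Real.toNNReal p) 1 : NNReal) : ℝ≥0∞))) f * BK.indic (P f) := by
  classical
  set b : Bool → ℝ≥0∞ :=
    fun c => cond c (((min (Real.toNNReal p) 1 : NNReal) : ℝ≥0∞)) (1 - ((min (Real.toNNReal p) 1 : NNReal) : ℝ≥0∞)) with hb
  have hsingle : ∀ f : X → Bool, bernoulliProduct X p {f} = BK.wt b f := by
    intro f
    unfold bernoulliProduct
    rw [← Set.univ_pi_singleton f, MeasureTheory.Measure.pi_pi]
    unfold BK.wt
    refine Finset.prod_congr rfl fun x _ => ?_
    rw [PMF.toMeasure_apply_singleton _ _ (measurableSet_singleton _)]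
    rfl
  have hS : {f : X → Bool | P f} =
      ⋃ f ∈ (Finset.univ.filter (fun f : X → Bool => P f) : Finset (X → Bool)), {f} := by
    ext f; simp
  have hdisj : Set.PairwiseDisjoint
      ((Finset.univ.filter (fun f : X → Bool => P f) : Finset (X → Bool)) : Set (X → Bool))
      (fun f => ({f} : Set (X → Bool))) := by
    intro f hf g hg hfg
    simp only [Set.disjoint_singleton_left, Set.mem_singleton_iff]
    exact hfg
  rw [hS, MeasureTheory.measure_biUnion_finset hdisj (fun f _ => measurableSet_singleton f),
    Finset.sum_filter]
  refine Finset.sum_congr rfl fun f _ => ?_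
  unfold BK.indic
  by_cases hPf : P f
  · rw [if_pos hPf, if_pos hPf, hsingle f, mul_one]
  · rw [if_neg hPf, if_neg hPf, mul_zero]

open scoped Classical in
theorem BK.sum_wt_eq_one {X : Type*} [Fintype X] [DecidableEq X] (p : ℝ) :
    (∑ f : X → Bool, BK.wt (fun c => cond c (((min (Real.toNNReal p) 1 : NNReal) : ℝ≥0∞))
      (1 - ((min (Real.toNNReal p) 1 : NNReal) : ℝ≥0∞))) f) = 1 := by
  have hprob : MeasureTheory.IsProbabilityMeasure (bernoulliProduct X p) := by
    unfold bernoulliProduct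
    infer_instance
  have h := BK.measure_eq_sum (X := X) p (fun _ => True)
  simp only [BK.indic, if_pos trivial, mul_one] at h
  rw [← h]
  have : {f : X → Bool | True} = Set.univ := by ext f; simp
  rw [this, hprob.measure_univ]

set_option maxHeartbeats 1000000 in
theorem statement5 {X : Type*} [MetricSpace X] [Fintype X] (Q p : ℝ) (hQ : 6 ≤ Q)
    (hp0 : 0 ≤ p) (hp1 : p ≤ 1) (n : ℕ) (B : Set X) :
    bernoulliProduct X p
      {f | ∃ C₁ C₂ : Set X, IsChunk Q {x | f x = true} n C₁ ∧
        IsChunk Q {x | f x = true} n C₂ ∧ Disjoint C₁ C₂ ∧ C₁ ⊆ B ∧ C₂ ⊆ B} ≤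
    (bernoulliProduct X p {f | ∃ C : Set X, IsChunk Q {x | f x = true} n C ∧ C ⊆ B}) ^ 2 := by
  classical
  set b : Bool → ℝ≥0∞ :=
    fun c => cond c (((min (Real.toNNReal p) 1 : NNReal) : ℝ≥0∞)) (1 - ((min (Real.toNNReal p) 1 : NNReal) : ℝ≥0∞)) with hb
  set 𝒮 : Set (Set X) := {C : Set X | IsChunk Q C n C ∧ C ⊆ B} with h𝒮
  have hE : ∀ f : X → Bool,
      (∃ C : Set X, IsChunk Q {x | f x = true} n C ∧ C ⊆ B) ↔ ∃ S ∈ 𝒮, BK.Hits f S := by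
    intro f
    constructor
    · rintro ⟨C, hC, hCB⟩
      rw [BK.isChunk_iff] at hC
      exact ⟨C, ⟨hC.1, hCB⟩, fun x hx => hC.2 hx⟩
    · rintro ⟨S, ⟨hS, hSB⟩, hhit⟩
      exact ⟨S, BK.isChunk_iff.2 ⟨hS, fun x hx => hhit x hx⟩, hSB⟩
  have hD : ∀ f : X → Bool,
      (∃ C₁ C₂ : Set X, IsChunk Q {x | f x = true} n C₁ ∧
        IsChunk Q {x | f x = true} n C₂ ∧ Disjoint C₁ C₂ ∧ C₁ ⊆ B ∧ C₂ ⊆ B) ↔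
      ∃ S₁ ∈ 𝒮, ∃ S₂ ∈ 𝒮, Disjoint S₁ S₂ ∧ BK.Hits f S₁ ∧ BK.Hits f S₂ := by
    intro f
    constructor
    · rintro ⟨C₁, C₂, hC₁, hC₂, hd, hB₁, hB₂⟩
      rw [BK.isChunk_iff] at hC₁ hC₂
      exact ⟨C₁, ⟨hC₁.1, hB₁⟩, C₂, ⟨hC₂.1, hB₂⟩, hd,
        fun x hx => hC₁.2 hx, fun x hx => hC₂.2 hx⟩
    · rintro ⟨S₁, ⟨hS₁, hB₁⟩, S₂, ⟨hS₂, hB₂⟩, hd, hh₁, hh₂⟩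
      exact ⟨S₁, S₂, BK.isChunk_iff.2 ⟨hS₁, fun x hx => hh₁ x hx⟩,
        BK.isChunk_iff.2 ⟨hS₂, fun x hx => hh₂ x hx⟩, hd, hB₁, hB₂⟩
  have hDset : {f : X → Bool | ∃ C₁ C₂ : Set X, IsChunk Q {x | f x = true} n C₁ ∧
        IsChunk Q {x | f x = true} n C₂ ∧ Disjoint C₁ C₂ ∧ C₁ ⊆ B ∧ C₂ ⊆ B}
      = {f : X → Bool | ∃ S₁ ∈ 𝒮, ∃ S₂ ∈ 𝒮, Disjoint S₁ S₂ ∧ BK.Hits f S₁ ∧ BK.Hits f S₂} := by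
    ext f; exact hD f
  have hEset : {f : X → Bool | ∃ C : Set X, IsChunk Q {x | f x = true} n C ∧ C ⊆ B}
      = {f : X → Bool | ∃ S ∈ 𝒮, BK.Hits f S} := by
    ext f; exact hE f
  rw [hDset, hEset, BK.measure_eq_sum p
      (fun f => ∃ S₁ ∈ 𝒮, ∃ S₂ ∈ 𝒮, Disjoint S₁ S₂ ∧ BK.Hits f S₁ ∧ BK.Hits f S₂),
    BK.measure_eq_sum p (fun f => ∃ S ∈ 𝒮, BK.Hits f S), ← hb, sq]
  exact BK.main' (by rw [hb]; exact BK.sum_wt_eq_one p)
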